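/- The tropicalization map trop: (𝔾_m^r)^an → ℝ^r, sending a multiplicative seminorm p on K[z_1^{±1},…,z_r^{±1}] extending |·| on K to (−log p(z_1), …, −log p(z_r)), is continuous and proper (preimages of compact sets are compact). -/

import Mathlib

/-- The Berkovich analytification `(𝔾_m^r)^an` of the split torus over a complete
non-archimedean field `K`: the set of multiplicative (ultrametric, nonnegative)
seminorms on the Laurent polynomial ring `K[z_1^{±1},…,z_r^{±1}]`, modelled as
`AddMonoidAlgebra K (ℤ^r)`, extending the absolute value of `K`. -/
def TorusBerk (K : Type*) [NormedField K] (r : ℕ) : Type _ :=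
  {p : AddMonoidAlgebra K (Fin r → ℤ) → ℝ //
    (∀ f g, p (f * g) = p f * p g) ∧
    (∀ f g, p (f + g) ≤ max (p f) (p g)) ∧
    (∀ a : K, p (AddMonoidAlgebra.single 0 a) = ‖a‖) ∧
    (∀ f, 0 ≤ p f)}

/-- The topology on `(𝔾_m^r)^an`: the weakest topology making `p ↦ p(f)` continuous
for every Laurent polynomial `f` (subspace of the product topology). -/
noncomputable instance (K : Type*) [NormedField K] (r : ℕ) :
    TopologicalSpace (TorusBerk K r) := by
  unfold TorusBerk; infer_instance

/-- The tropicalization map `trop : (𝔾_m^r)^an → ℝ^r`,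
`p ↦ (−log p(z_1), …, −log p(z_r))`. -/
noncomputable def tropMap {K : Type*} [NormedField K] {r : ℕ} (p : TorusBerk K r) :
    Fin r → ℝ :=
  fun i => - Real.log (p.1 (AddMonoidAlgebra.single (Pi.single i 1) 1))


open AddMonoidAlgebra Finset

section helpers
variable {K : Type*} [NormedField K] {r : ℕ}
variable {x : AddMonoidAlgebra K (Fin r → ℤ) → ℝ}
variable (hm : ∀ f g, x (f * g) = x f * x g)
    (hu : ∀ f g, x (f + g) ≤ max (x f) (x g))
    (hn : ∀ a : K, x (AddMonoidAlgebra.single 0 a) = ‖a‖)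
    (hp : ∀ f, 0 ≤ x f)

include hn in
theorem xb_one : x 1 = 1 := by
  rw [AddMonoidAlgebra.one_def]; simpa using hn 1

include hn in
theorem xb_zero : x 0 = 0 := by
  have := hn 0; simpa using this

include hm hn in
theorem xb_mul_neg (v : Fin r → ℤ) :
    x (AddMonoidAlgebra.single v 1) * x (AddMonoidAlgebra.single (-v) 1) = 1 := by
  rw [← hm, AddMonoidAlgebra.single_mul_single, add_neg_cancel, mul_one,
    ← AddMonoidAlgebra.one_def, xb_one hn]

include hm hn hp in
theorem xb_pos (v : Fin r → ℤ) : 0 < x (AddMonoidAlgebra.single v 1) := by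
  rcases lt_or_eq_of_le (hp (AddMonoidAlgebra.single v 1)) with h | h
  · exact h
  · exfalso
    have := xb_mul_neg hm hn v
    rw [← h, zero_mul] at this
    norm_num at this

include hm hn in
theorem xb_neg_eq (v : Fin r → ℤ) :
    x (AddMonoidAlgebra.single (-v) 1) = (x (AddMonoidAlgebra.single v 1))⁻¹ :=
  eq_inv_of_mul_eq_one_right (xb_mul_neg hm hn v)

include hm in
theorem xb_add (v w : Fin r → ℤ) :
    x (AddMonoidAlgebra.single (v + w) 1) =
      x (AddMonoidAlgebra.single v 1) * x (AddMonoidAlgebra.single w 1) := by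
  rw [← hm, AddMonoidAlgebra.single_mul_single, mul_one]

include hm hn in
theorem xb_pow_nat (i : Fin r) (k : ℕ) :
    x (AddMonoidAlgebra.single (Pi.single i (k : ℤ)) 1) =
      (x (AddMonoidAlgebra.single (Pi.single i 1) 1)) ^ k := by
  induction k with
  | zero => simp [xb_one hn, ← AddMonoidAlgebra.one_def]
  | succ k ih =>
      have : (Pi.single i ((k + 1 : ℕ) : ℤ) : Fin r → ℤ)
          = Pi.single i (k : ℤ) + Pi.single i 1 := by
        push_cast
        rw [← Pi.single_add]
      rw [this, xb_add hm, ih, pow_succ]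

include hm hn hp in
theorem xb_single_int_le (i : Fin r) {B : ℝ}
    (h1 : x (AddMonoidAlgebra.single (Pi.single i 1) 1) ≤ B)
    (h2 : x (AddMonoidAlgebra.single (-Pi.single i 1) 1) ≤ B) (n : ℤ) :
    x (AddMonoidAlgebra.single (Pi.single i n) 1) ≤ B ^ n.natAbs := by
  have ht : 0 < x (AddMonoidAlgebra.single (Pi.single i 1) 1) := xb_pos hm hn hp _
  rcases Int.natAbs_eq n with h | h
  · rw [h, xb_pow_nat hm hn]
    exact pow_le_pow_left₀ ht.le h1 _
  · rw [h]
    have : (Pi.single i (-(n.natAbs : ℤ)) : Fin r → ℤ) = -Pi.single i (n.natAbs : ℤ) := by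
      rw [Pi.single_neg]
    rw [this, xb_neg_eq hm hn, xb_pow_nat hm hn, ← inv_pow, Int.natAbs_neg, Int.natAbs_natCast]
    apply pow_le_pow_left₀ (inv_nonneg.2 ht.le)
    rw [← xb_neg_eq hm hn]
    exact h2

include hm hn hp in
theorem xb_single_le {B : ℝ}
    (h : ∀ i : Fin r, x (AddMonoidAlgebra.single (Pi.single i 1) 1) ≤ B ∧
      x (AddMonoidAlgebra.single (-Pi.single i 1) 1) ≤ B) (m : Fin r → ℤ) :
    x (AddMonoidAlgebra.single m 1) ≤ B ^ (∑ i, (m i).natAbs) := by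
  have key : ∀ s : Finset (Fin r),
      x (AddMonoidAlgebra.single (∑ i ∈ s, Pi.single i (m i)) 1) =
        ∏ i ∈ s, x (AddMonoidAlgebra.single (Pi.single i (m i)) 1) := by
    intro s
    induction s using Finset.induction_on with
    | empty => simp [xb_one hn, ← AddMonoidAlgebra.one_def]
    | insert _ _ hnot ih =>
        rw [Finset.sum_insert hnot, xb_add hm, ih, Finset.prod_insert hnot]
  have hm' : m = ∑ i, Pi.single i (m i) := (Finset.univ_sum_single m).symm
  calc x (AddMonoidAlgebra.single m 1)
      = ∏ i, x (AddMonoidAlgebra.single (Pi.single i (m i)) 1) := by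
        rw [← key]; exact congrArg (fun v => x (AddMonoidAlgebra.single v 1)) hm'
    _ ≤ ∏ i, B ^ (m i).natAbs := by
        apply Finset.prod_le_prod
        · exact fun i _ => (hp _)
        · exact fun i _ => xb_single_int_le hm hn hp i (h i).1 (h i).2 (m i)
    _ = B ^ (∑ i, (m i).natAbs) := Finset.prod_pow_eq_pow_sum _ _ _

include hu hn hp in
theorem xb_sum_le {ι : Type*} (s : Finset ι) (g : ι → AddMonoidAlgebra K (Fin r → ℤ)) :
    x (∑ m ∈ s, g m) ≤ ∑ m ∈ s, x (g m) := by
  classical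
  induction s using Finset.induction_on with
  | empty => simp [xb_zero hn]
  | insert _ _ hnot ih =>
      rw [Finset.sum_insert hnot, Finset.sum_insert hnot]
      calc x (g _ + _) ≤ max (x (g _)) (x _) := hu _ _
        _ ≤ x (g _) + x _ := max_le_add_of_nonneg (hp _) (hp _)
        _ ≤ _ := by exact add_le_add_right ih _

include hm hu hn hp in
theorem xb_bound {B : ℝ}
    (h : ∀ i : Fin r, x (AddMonoidAlgebra.single (Pi.single i 1) 1) ≤ B ∧
      x (AddMonoidAlgebra.single (-Pi.single i 1) 1) ≤ B)
    (f : AddMonoidAlgebra K (Fin r → ℤ)) :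
    x f ≤ ∑ m ∈ f.coeff.support, ‖f.coeff m‖ * B ^ (∑ i, (m i).natAbs) := by
  conv_lhs => rw [← AddMonoidAlgebra.sum_coeff_single f]
  rw [Finsupp.sum]
  refine le_trans (xb_sum_le hu hn hp _ _) (Finset.sum_le_sum fun m _ => ?_)
  have : (AddMonoidAlgebra.single m (f.coeff m) : AddMonoidAlgebra K (Fin r → ℤ))
      = AddMonoidAlgebra.single 0 (f.coeff m) * AddMonoidAlgebra.single m 1 := by
    rw [AddMonoidAlgebra.single_mul_single, zero_add, mul_one]
  rw [this, hm, hn]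
  exact mul_le_mul_of_nonneg_left (xb_single_le hm hn hp h m) (norm_nonneg _)

end helpers

/-- The tropicalization map `trop : (𝔾_m^r)^an → ℝ^r` is continuous
and proper (preimages of compact sets are compact). -/
theorem tropMap_continuous_and_proper {K : Type*} [NormedField K]
    [IsUltrametricDist K] [IsAlgClosed K] [CompleteSpace K]
    (hnontriv : ∃ a : K, a ≠ 0 ∧ ‖a‖ ≠ 1) (r : ℕ) :
    Continuous (tropMap (K := K) (r := r)) ∧
      ∀ C : Set (Fin r → ℝ), IsCompact C →
        IsCompact (tropMap (K := K) (r := r) ⁻¹' C) := by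
  classical
  set A := AddMonoidAlgebra K (Fin r → ℤ) with hA
  set zi : Fin r → A := fun i => AddMonoidAlgebra.single (Pi.single i 1) 1 with hzi
  have hval : Continuous (fun p : TorusBerk K r => (p.1 : A → ℝ)) :=
    continuous_subtype_val
  have hcoord : ∀ f : A, Continuous fun p : TorusBerk K r => p.1 f :=
    fun f => (continuous_apply f).comp hval
  have hppos : ∀ (p : TorusBerk K r) (v : Fin r → ℤ),
      0 < p.1 (AddMonoidAlgebra.single v 1) :=
    fun p v => xb_pos p.2.1 p.2.2.2.1 p.2.2.2.2 v
  have hcont : Continuous (tropMap (K := K) (r := r)) := by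
    apply continuous_pi
    intro i
    apply Continuous.neg
    rw [continuous_iff_continuousAt]
    intro p
    have hlog : ContinuousAt Real.log
        (p.1 (AddMonoidAlgebra.single (Pi.single i 1) 1)) :=
      Real.continuousAt_log (hppos p _).ne'
    exact ContinuousAt.comp (x := p)
      (f := fun q : TorusBerk K r => q.1 (AddMonoidAlgebra.single (Pi.single i 1) 1))
      hlog (hcoord _).continuousAt
  refine ⟨hcont, fun C hC => ?_⟩
  obtain ⟨R0, hR0⟩ := hC.isBounded.subset_closedBall 0
  set R := max R0 0 with hRdef
  have hR : ∀ y ∈ C, ∀ i, |y i| ≤ R := by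
    intro y hy i
    have h1 : ‖y‖ ≤ R0 := by
      simpa [Metric.mem_closedBall, dist_zero_right] using hR0 hy
    calc |y i| = ‖y i‖ := (Real.norm_eq_abs _).symm
      _ ≤ ‖y‖ := norm_le_pi_norm y i
      _ ≤ R := h1.trans (le_max_left _ _)
  set B := Real.exp R with hBdef
  set M : A → ℝ :=
    fun f => ∑ m ∈ f.coeff.support, ‖f.coeff m‖ * B ^ (∑ i, (m i).natAbs) with hMdef
  set D : Set (Fin r → ℝ) :=
    (fun (y : Fin r → ℝ) (i : Fin r) => Real.exp (-(y i))) '' C with hDdef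
  have hDc : IsCompact D :=
    hC.image (continuous_pi fun i => ((continuous_apply i).neg).rexp)
  set S : Set (A → ℝ) :=
    {x | (∀ f g, x (f * g) = x f * x g) ∧ (∀ f g, x (f + g) ≤ max (x f) (x g)) ∧
      (∀ a : K, x (AddMonoidAlgebra.single 0 a) = ‖a‖) ∧ (∀ f, 0 ≤ x f) ∧
      (fun i => x (zi i)) ∈ D} with hSdef
  have hSbound : ∀ x ∈ S, ∀ i : Fin r,
      x (zi i) ≤ B ∧ x (AddMonoidAlgebra.single (-Pi.single i 1) 1) ≤ B := by
    rintro x ⟨hm, hu, hn, hp, y, hyC, hyx⟩ i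
    have hxi : x (zi i) = Real.exp (-(y i)) := (congrFun hyx i).symm
    constructor
    · rw [hxi]
      exact Real.exp_le_exp.2 ((neg_le_abs _).trans (hR y hyC i))
    · have : x (AddMonoidAlgebra.single (-Pi.single i 1) 1) = (x (zi i))⁻¹ :=
        xb_neg_eq hm hn _
      rw [this, hxi, ← Real.exp_neg, neg_neg]
      exact Real.exp_le_exp.2 ((le_abs_self _).trans (hR y hyC i))
  have hSsub : S ⊆ Set.pi Set.univ fun f => Set.Icc 0 (M f) := by
    rintro x hx f -
    exact ⟨hx.2.2.2.1 f,
      xb_bound hx.1 hx.2.1 hx.2.2.1 hx.2.2.2.1 (hSbound x hx) f⟩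
  have hSclosed : IsClosed S := by
    have h1 : IsClosed {x : A → ℝ | ∀ f g, x (f * g) = x f * x g} := by
      have : {x : A → ℝ | ∀ f g, x (f * g) = x f * x g}
          = ⋂ f, ⋂ g, {x : A → ℝ | x (f * g) = x f * x g} := by
        ext x; simp [Set.mem_iInter]
      rw [this]
      exact isClosed_iInter fun f => isClosed_iInter fun g =>
        isClosed_eq (continuous_apply _) ((continuous_apply f).mul (continuous_apply g))
    have h2 : IsClosed {x : A → ℝ | ∀ f g, x (f + g) ≤ max (x f) (x g)} := by
      have : {x : A → ℝ | ∀ f g, x (f + g) ≤ max (x f) (x g)}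
          = ⋂ f, ⋂ g, {x : A → ℝ | x (f + g) ≤ max (x f) (x g)} := by
        ext x; simp [Set.mem_iInter]
      rw [this]
      exact isClosed_iInter fun f => isClosed_iInter fun g =>
        isClosed_le (continuous_apply _) ((continuous_apply f).max (continuous_apply g))
    have h3 : IsClosed {x : A → ℝ | ∀ a : K, x (AddMonoidAlgebra.single 0 a) = ‖a‖} := by
      have : {x : A → ℝ | ∀ a : K, x (AddMonoidAlgebra.single 0 a) = ‖a‖}
          = ⋂ a : K, {x : A → ℝ | x (AddMonoidAlgebra.single 0 a) = ‖a‖} := by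
        ext x; simp [Set.mem_iInter]
      rw [this]
      exact isClosed_iInter fun a => isClosed_eq (continuous_apply _) continuous_const
    have h4 : IsClosed {x : A → ℝ | ∀ f, 0 ≤ x f} := by
      have : {x : A → ℝ | ∀ f, 0 ≤ x f} = ⋂ f, {x : A → ℝ | 0 ≤ x f} := by
        ext x; simp [Set.mem_iInter]
      rw [this]
      exact isClosed_iInter fun f => isClosed_le continuous_const (continuous_apply _)
    have h5 : IsClosed {x : A → ℝ | (fun i => x (zi i)) ∈ D} :=
      hDc.isClosed.preimage (continuous_pi fun i => continuous_apply (zi i))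
    exact h1.inter (h2.inter (h3.inter (h4.inter h5)))
  have hScompact : IsCompact S :=
    (isCompact_univ_pi fun f => isCompact_Icc).of_isClosed_subset hSclosed hSsub
  have himg : Subtype.val '' (tropMap (K := K) (r := r) ⁻¹' C) = S := by
    ext x
    constructor
    · rintro ⟨p, hpC, rfl⟩
      refine ⟨p.2.1, p.2.2.1, p.2.2.2.1, p.2.2.2.2, tropMap p, hpC, ?_⟩
      funext i
      show Real.exp (-(tropMap p i)) = p.1 (zi i)
      rw [show tropMap p i = -Real.log (p.1 (zi i)) from rfl, neg_neg]
      exact Real.exp_log (hppos p _)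
    · rintro ⟨hm, hu, hn, hp, y, hyC, hyx⟩
      refine ⟨⟨x, hm, hu, hn, hp⟩, ?_, rfl⟩
      show tropMap (⟨x, hm, hu, hn, hp⟩ : TorusBerk K r) ∈ C
      have : tropMap (⟨x, hm, hu, hn, hp⟩ : TorusBerk K r) = y := by
        funext i
        show -Real.log (x (zi i)) = y i
        rw [(congrFun hyx i).symm, Real.log_exp, neg_neg]
      rw [this]; exact hyC
  have hind : Topology.IsInducing (Subtype.val : TorusBerk K r → (A → ℝ)) :=
    Topology.IsInducing.subtypeVal
  exact hind.isCompact_iff.2 (by convert hScompact using 1; exact himg)
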